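/- For any integer N ≥ 3, real numbers a with 0 < a, h > 0, and real θ, the quantity y = ∑_{k=1}^N cos(2kπ/N - θ) / [1 + a² - 2a·cos(2kπ/N - θ) + h²]^(3/2) is strictly positive. -/

import Mathlib

open Real Finset

lemma sumcos (N : ℕ) (hN : 3 ≤ N) (θ : ℝ) :
    ∑ k ∈ Finset.Icc 1 N, Real.cos (2 * k * π / N - θ) = 0 := by
  set ζ : ℂ := Complex.exp (2 * ↑π * Complex.I / N) with hζ
  have hprim : IsPrimitiveRoot ζ N := Complex.isPrimitiveRoot_exp N (by omega)
  have hgeom : ∑ i ∈ Finset.range N, ζ ^ i = 0 :=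
    hprim.geom_sum_eq_zero (by omega)
  have hterm : ∀ k : ℕ, Real.cos (2 * k * π / N - θ) =
      (Complex.exp (-θ * Complex.I) * ζ ^ k).re := by
    intro k
    rw [hζ, ← Complex.exp_nat_mul, ← Complex.exp_add]
    rw [show (-θ : ℂ) * Complex.I + k * (2 * ↑π * Complex.I / N)
        = ((2 * k * π / N - θ : ℝ) : ℂ) * Complex.I by push_cast; ring]
    rw [Complex.exp_ofReal_mul_I_re]
  calc ∑ k ∈ Finset.Icc 1 N, Real.cos (2 * k * π / N - θ)
      = (∑ k ∈ Finset.Icc 1 N, Complex.exp (-θ * Complex.I) * ζ ^ k).re := by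
        rw [Complex.re_sum]; exact Finset.sum_congr rfl fun k _ => hterm k
    _ = 0 := by
        have hz : ∑ k ∈ Finset.Icc 1 N, ζ ^ k = 0 := by
          rw [← Finset.Ico_add_one_right_eq_Icc, Finset.sum_Ico_eq_sum_range]
          simp only [Nat.add_sub_cancel, pow_add, pow_one, Nat.succ_sub_one]
          rw [← Finset.mul_sum, hgeom, mul_zero]
        rw [← Finset.mul_sum, hz, mul_zero, Complex.zero_re]

lemma exists_cos_ne (N : ℕ) (hN : 3 ≤ N) (θ : ℝ) :
    ∃ k ∈ Finset.Icc 1 N, Real.cos (2 * k * π / N - θ) ≠ 0 := by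
  by_contra hcon
  push_neg at hcon
  have h1 : Real.cos (2 * (1 : ℕ) * π / N - θ) = 0 :=
    hcon 1 (Finset.mem_Icc.mpr ⟨le_refl 1, by omega⟩)
  have h2 : Real.cos (2 * (2 : ℕ) * π / N - θ) = 0 :=
    hcon 2 (Finset.mem_Icc.mpr ⟨by omega, by omega⟩)
  rw [Real.cos_eq_zero_iff] at h1 h2
  obtain ⟨n, hn⟩ := h1
  obtain ⟨m, hm⟩ := h2
  have hNr : (0:ℝ) < N := by positivity
  have key : ((m - n : ℤ) : ℝ) * N = 2 := by
    have hπ := Real.pi_pos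
    have : 2 * (2:ℕ) * π / N - θ - (2 * (1:ℕ) * π / N - θ) = (m - n : ℤ) * π := by
      rw [hn, hm]; push_cast; ring
    push_cast at this ⊢
    field_simp at this
    nlinarith [this]
  have key' : (m - n) * (N : ℤ) = 2 := by exact_mod_cast key
  have hN3 : (3:ℤ) ≤ N := by exact_mod_cast hN
  rcases le_or_gt (m - n) 0 with hmn | hmn
  · nlinarith
  · nlinarith

theorem stmt_2 (N : ℕ) (hN : 3 ≤ N) (a h θ : ℝ) (ha : 0 < a) (hh : 0 < h) :
    0 < ∑ k ∈ Finset.Icc 1 N,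
      Real.cos (2 * k * π / N - θ) /
        (1 + a ^ 2 - 2 * a * Real.cos (2 * k * π / N - θ) + h ^ 2) ^ ((3 : ℝ) / 2) := by
  set B : ℝ := (1 + a ^ 2 + h ^ 2) ^ ((3:ℝ)/2) with hBdef
  have hB0 : (0:ℝ) < 1 + a ^ 2 + h ^ 2 := by positivity
  have hB : 0 < B := Real.rpow_pos_of_pos hB0 _
  -- pointwise comparison
  have hpoint : ∀ c : ℝ, |c| ≤ 1 →
      c / B ≤ c / (1 + a ^ 2 - 2 * a * c + h ^ 2) ^ ((3:ℝ)/2) ∧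
      (c ≠ 0 → c / B < c / (1 + a ^ 2 - 2 * a * c + h ^ 2) ^ ((3:ℝ)/2)) := by
    intro c hc
    have hc1 : c ≤ 1 := (abs_le.mp hc).2
    have hD0 : (0:ℝ) < 1 + a ^ 2 - 2 * a * c + h ^ 2 := by
      nlinarith [sq_nonneg (1 - a), mul_nonneg ha.le (sub_nonneg.mpr hc1)]
    have hDpow : 0 < (1 + a ^ 2 - 2 * a * c + h ^ 2) ^ ((3:ℝ)/2) :=
      Real.rpow_pos_of_pos hD0 _
    rcases lt_trichotomy c 0 with hcs | hcs | hcs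
    · have hlt : 1 + a ^ 2 + h ^ 2 < 1 + a ^ 2 - 2 * a * c + h ^ 2 := by nlinarith
      have hplt : B < (1 + a ^ 2 - 2 * a * c + h ^ 2) ^ ((3:ℝ)/2) :=
        Real.rpow_lt_rpow hB0.le hlt (by norm_num)
      have : c / B < c / (1 + a ^ 2 - 2 * a * c + h ^ 2) ^ ((3:ℝ)/2) := by
        rw [div_lt_div_iff₀ hB hDpow]
        nlinarith
      exact ⟨this.le, fun _ => this⟩
    · simp [hcs]
    · have hlt : 1 + a ^ 2 - 2 * a * c + h ^ 2 < 1 + a ^ 2 + h ^ 2 := by nlinarith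
      have hplt : (1 + a ^ 2 - 2 * a * c + h ^ 2) ^ ((3:ℝ)/2) < B :=
        Real.rpow_lt_rpow hD0.le hlt (by norm_num)
      have : c / B < c / (1 + a ^ 2 - 2 * a * c + h ^ 2) ^ ((3:ℝ)/2) := by
        rw [div_lt_div_iff₀ hB hDpow]
        nlinarith
      exact ⟨this.le, fun _ => this⟩
  obtain ⟨i, hi, hine⟩ := exists_cos_ne N hN θ
  have hlt : ∑ k ∈ Finset.Icc 1 N, Real.cos (2 * k * π / N - θ) / B <
      ∑ k ∈ Finset.Icc 1 N, Real.cos (2 * k * π / N - θ) /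
        (1 + a ^ 2 - 2 * a * Real.cos (2 * k * π / N - θ) + h ^ 2) ^ ((3:ℝ)/2) := by
    refine Finset.sum_lt_sum (fun k _ => (hpoint _ (Real.abs_cos_le_one _)).1) ⟨i, hi, ?_⟩
    exact (hpoint _ (Real.abs_cos_le_one _)).2 hine
  have hzero : ∑ k ∈ Finset.Icc 1 N, Real.cos (2 * k * π / N - θ) / B = 0 := by
    rw [← Finset.sum_div, sumcos N hN θ, zero_div]
  linarith
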